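/- Let T̄ be a scheme with two effective Cartier divisors T⁺, T⁻, let F = T⁺ ×_{T̄} T⁻ be their scheme-theoretic intersection, let π : Bl_F(T̄) → T̄ be the blow-up along F with exceptional divisor E = π^{−1}(F). Then T̃⁺ := π*T⁺ − E and T̃⁻ := π*T⁻ − E are effective Cartier divisors with disjoint supports: |T̃⁺| ∩ |T̃⁻| = ∅. -/

import Mathlib

/-!
Statement 6 (Lemma `l2.1`): for a modulus triple `(T̄, T⁺, T⁻)`, on the blow-up
`π : Bl_F(T̄) → T̄` along `F = T⁺ ×_{T̄} T⁻` with exceptional divisor `E = π⁻¹(F)`,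
the effective Cartier divisors `T̃⁺ = π*T⁺ − E`, `T̃⁻ = π*T⁻ − E` have disjoint supports.

Local, principal model on an affine chart `Spec R` of the blow-up: `tp, tm` are local
equations of `π*T⁺`, `π*T⁻`, `e` a local equation of the exceptional divisor `E`
(a non-zero-divisor).  Since `E = π⁻¹(F)` and `I_F = I_{T⁺} + I_{T⁻}`, we have
`(e) = (tp) + (tm)`.  `E ≤ π*T±` gives `tp = e * ap`, `tm = e * am`, where `ap, am`
are local equations of `T̃⁺, T̃⁻`.  The conclusion `|T̃⁺| ∩ |T̃⁻| = ∅` is the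
disjointness of the zero loci of `ap` and `am` in `Spec R`.
-/

theorem statement6 {R : Type*} [CommRing R] (tp tm e ap am : R)
    (he : e ∈ nonZeroDivisors R)
    (h1 : tp = e * ap) (h2 : tm = e * am)
    (hE : Ideal.span {e} = Ideal.span {tp} + Ideal.span {tm}) :
    PrimeSpectrum.zeroLocus {ap} ∩ PrimeSpectrum.zeroLocus {am} = ∅ := by
  have hmem : e ∈ Ideal.span {tp} + Ideal.span {tm} := by
    rw [← hE]; exact Ideal.mem_span_singleton_self e
  obtain ⟨u, hu, v, hv, huv⟩ := Submodule.mem_sup.mp hmem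
  obtain ⟨x, rfl⟩ := Ideal.mem_span_singleton'.mp hu
  obtain ⟨y, rfl⟩ := Ideal.mem_span_singleton'.mp hv
  have key : x * ap + y * am = 1 := by
    have hz : (x * ap + y * am - 1) * e = 0 := by
      linear_combination huv - x * h1 - y * h2
    have := he.2 _ hz
    linear_combination this
  ext P
  simp only [Set.mem_inter_iff, PrimeSpectrum.mem_zeroLocus, Set.singleton_subset_iff,
    Set.mem_empty_iff_false, iff_false, not_and, SetLike.mem_coe]
  intro hap ham
  have : (1 : R) ∈ P.asIdeal := by
    rw [← key]
    exact add_mem (P.asIdeal.mul_mem_left x hap) (P.asIdeal.mul_mem_left y ham)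
  exact P.isPrime.ne_top ((Ideal.eq_top_iff_one _).mpr this)
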